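/- Let π: B → A be a G-equivariant isogeny of abelian varieties with kernel Δ, and let σ ∈ G be a pseudoreflection. Write E_{σ,B} = im(1-σ) ⊆ B, D_{σ,B} = im(1 + σ + ⋯ + σ^{r-1}) ⊆ B, F_{σ,B} = E_{σ,B} ∩ D_{σ,B}, and similarly for A. If π restricted to E_{σ,B} is injective and π maps F_{σ,B} onto F_{σ,A}, then Δ ⊆ D_{σ,B}. -/

import Mathlib

noncomputable section

abbrev Vn (n : ℕ) := Fin n → ℂ

def IsLattice {n : ℕ} (Λ : AddSubgroup (Vn n)) : Prop :=
  DiscreteTopology Λ ∧ Submodule.span ℝ (Λ : Set (Vn n)) = ⊤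

/-- A pseudoreflection: a linear automorphism whose fixed subspace is a hyperplane. -/
def IsPseudoreflection {n : ℕ} (g : Vn n ≃ₗ[ℂ] Vn n) : Prop :=
  Module.finrank ℂ
    (LinearMap.range ((1 : Vn n →ₗ[ℂ] Vn n) - (g : Vn n →ₗ[ℂ] Vn n))) = 1

theorem pow_mem_lattice {n : ℕ} (Λ : AddSubgroup (Vn n)) (f : Vn n ≃ₗ[ℂ] Vn n)
    (hf : ∀ v, v ∈ Λ ↔ f v ∈ Λ) (i : ℕ) :
    ∀ v ∈ Λ, (((f : Vn n →ₗ[ℂ] Vn n)) ^ i) v ∈ Λ := by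
  induction i with
  | zero => intro v hv; simpa using hv
  | succ i ih =>
      intro v hv
      rw [pow_succ, Module.End.mul_apply]
      exact ih _ ((hf v).1 hv)

/-- The endomorphism of the complex torus `ℂ^n ⧸ Λ` induced by `g : ℂ^n →ₗ ℂ^n`. -/
def indMap {n : ℕ} (Λ : AddSubgroup (Vn n)) (g : Vn n →ₗ[ℂ] Vn n)
    (h : ∀ v ∈ Λ, g v ∈ Λ) : (Vn n ⧸ Λ) →+ (Vn n ⧸ Λ) :=
  QuotientAddGroup.map Λ Λ g.toAddMonoidHom h

/-- Let `π : B → A` be a `G`-equivariant isogeny of abelian varieties with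
kernel `Δ` (here `B = ℂ^n ⧸ Λ_B`, `A = ℂ^n ⧸ Λ_A` with `Λ_B ⊆ Λ_A` and `π` the natural
projection), and let `σ ∈ G` be a pseudoreflection, of order `r`, acting compatibly on `B`
and `A`.  Write `E_{σ,B} = im (1 - σ) ⊆ B`, `D_{σ,B} = im (1 + σ + ⋯ + σ^(r-1)) ⊆ B`,
`F_{σ,B} = E_{σ,B} ∩ D_{σ,B}`, and similarly for `A`.  If `π` restricted to `E_{σ,B}` is
injective and `π` maps `F_{σ,B}` onto `F_{σ,A}`, then `Δ ⊆ D_{σ,B}`. -/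
theorem kernel_of_isogeny_in_Dsigma {n r : ℕ} (hr : 0 < r)
    (ΛB ΛA : AddSubgroup (Vn n)) (hBA : ΛB ≤ ΛA)
    (hLB : IsLattice ΛB) (hLA : IsLattice ΛA)
    (f : Vn n ≃ₗ[ℂ] Vn n)
    (hfB : ∀ v, v ∈ ΛB ↔ f v ∈ ΛB) (hfA : ∀ v, v ∈ ΛA ↔ f v ∈ ΛA)
    (hord : orderOf f = r) (hpsr : IsPseudoreflection f) :
    let π : (Vn n ⧸ ΛB) →+ (Vn n ⧸ ΛA) :=
      QuotientAddGroup.map ΛB ΛA (AddMonoidHom.id (Vn n)) (fun v hv => hBA hv)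
    let EB := (indMap ΛB ((1 : Vn n →ₗ[ℂ] Vn n) - f)
      (fun v hv => ΛB.sub_mem hv ((hfB v).1 hv))).range
    let DB := (indMap ΛB (∑ i ∈ Finset.range r, ((f : Vn n →ₗ[ℂ] Vn n)) ^ i)
      (fun v hv => by
        simpa [LinearMap.sum_apply] using AddSubgroup.sum_mem ΛB
          (fun i _ => pow_mem_lattice ΛB f hfB i v hv))).range
    let EA := (indMap ΛA ((1 : Vn n →ₗ[ℂ] Vn n) - f)
      (fun v hv => ΛA.sub_mem hv ((hfA v).1 hv))).range
    let DA := (indMap ΛA (∑ i ∈ Finset.range r, ((f : Vn n →ₗ[ℂ] Vn n)) ^ i)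
      (fun v hv => by
        simpa [LinearMap.sum_apply] using AddSubgroup.sum_mem ΛA
          (fun i _ => pow_mem_lattice ΛA f hfA i v hv))).range
    (∀ x ∈ EB, ∀ y ∈ EB, π x = π y → x = y) →
    (∀ z ∈ EA ⊓ DA, ∃ w ∈ EB ⊓ DB, π w = z) →
    π.ker ≤ DB := by
  intro π EB DB EA DA hinj hsurj z hz
  -- Notation
  set F : Vn n →ₗ[ℂ] Vn n := (f : Vn n →ₗ[ℂ] Vn n) with hF
  set N : Vn n →ₗ[ℂ] Vn n := ∑ i ∈ Finset.range r, F ^ i with hN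
  have hFr : F ^ r = 1 := by
    refine LinearMap.ext fun v => ?_
    have h1 : f ^ r = 1 := by rw [← hord]; exact pow_orderOf_eq_one f
    have h2 : (⇑(f ^ r)) v = v := by rw [h1]; rfl
    rw [LinearEquiv.coe_pow] at h2
    simp only [Module.End.pow_apply, Module.End.one_apply]
    have : ⇑F = ⇑f := rfl
    rw [this]
    exact h2
  -- representative of z
  obtain ⟨a, rfl⟩ := QuotientAddGroup.mk_surjective z
  have haA : a ∈ ΛA := by
    have := hz
    rw [AddMonoidHom.mem_ker] at this
    change ((a : Vn n) : Vn n ⧸ ΛA) = 0 at this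
    exact (QuotientAddGroup.eq_zero_iff _).1 this
  have hrC : (r : ℂ) ≠ 0 := Nat.cast_ne_zero.2 hr.ne'
  -- decomposition a = x + y
  set y : Vn n := (r : ℂ)⁻¹ • N a with hy
  set x : Vn n := a - y with hx
  set S : Vn n →ₗ[ℂ] Vn n := ∑ i ∈ Finset.range r, ∑ j ∈ Finset.range i, F ^ j with hS
  set w : Vn n := (r : ℂ)⁻¹ • S a with hw
  have hgeom : ((1 : Vn n →ₗ[ℂ] Vn n) - F) * S = (r : ℂ) • 1 - N := by
    rw [hS, Finset.mul_sum]
    have h1 : ∀ i, ((1 : Vn n →ₗ[ℂ] Vn n) - F) * (∑ j ∈ Finset.range i, F ^ j)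
        = 1 - F ^ i := by
      intro i
      have := mul_geom_sum F i
      calc ((1 : Vn n →ₗ[ℂ] Vn n) - F) * (∑ j ∈ Finset.range i, F ^ j)
          = -((F - 1) * ∑ j ∈ Finset.range i, F ^ j) := by
            rw [← neg_sub F 1]; exact neg_mul (α := Vn n →ₗ[ℂ] Vn n) _ _
        _ = -(F ^ i - 1) := by rw [this]
        _ = 1 - F ^ i := neg_sub _ _
    rw [Finset.sum_congr rfl fun i _ => h1 i, Finset.sum_sub_distrib, hN,
      Finset.sum_const, Finset.card_range, Nat.cast_smul_eq_nsmul ℂ]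
  have hwx : ((1 : Vn n →ₗ[ℂ] Vn n) - F) w = x := by
    have h2 : ((1 : Vn n →ₗ[ℂ] Vn n) - F) (S a) = (r : ℂ) • a - N a := by
      have := congrArg (fun g : Vn n →ₗ[ℂ] Vn n => g a) hgeom
      simpa using this
    rw [hw, map_smul, h2, hx, hy, smul_sub, smul_smul, inv_mul_cancel₀ hrC,
      one_smul]
  have hya : N ((r : ℂ)⁻¹ • a) = y := by rw [map_smul, hy]
  have haxy : a = x + y := by rw [hx]; abel
  -- memberships
  have hxEB : (x : Vn n ⧸ ΛB) ∈ EB := ⟨(w : Vn n ⧸ ΛB), by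
    show QuotientAddGroup.map _ _ _ _ _ = _
    show ((((1 : Vn n →ₗ[ℂ] Vn n) - F) w : Vn n) : Vn n ⧸ ΛB) = _
    exact congrArg _ hwx⟩
  have hyDB : (y : Vn n ⧸ ΛB) ∈ DB := ⟨(((r : ℂ)⁻¹ • a : Vn n) : Vn n ⧸ ΛB), by
    show QuotientAddGroup.map _ _ _ _ _ = _
    show ((N ((r : ℂ)⁻¹ • a) : Vn n) : Vn n ⧸ ΛB) = _
    exact congrArg _ hya⟩
  have hπmk : ∀ v : Vn n, π ((v : Vn n ⧸ ΛB)) = (v : Vn n ⧸ ΛA) := fun v => by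
    rfl
  have hπx_eq : π ((x : Vn n ⧸ ΛB)) = -π ((y : Vn n ⧸ ΛB)) := by
    have h0 : π ((x : Vn n ⧸ ΛB)) + π ((y : Vn n ⧸ ΛB)) = 0 := by
      rw [hπmk, hπmk, ← QuotientAddGroup.mk_add, ← haxy]
      exact (QuotientAddGroup.eq_zero_iff _).2 haA
    exact eq_neg_of_add_eq_zero_left h0
  have hπxEA : π ((x : Vn n ⧸ ΛB)) ∈ EA := by
    rw [hπmk]
    exact ⟨(w : Vn n ⧸ ΛA), by
      show QuotientAddGroup.map _ _ _ _ _ = _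
      show ((((1 : Vn n →ₗ[ℂ] Vn n) - F) w : Vn n) : Vn n ⧸ ΛA) = _
      exact congrArg _ hwx⟩
  have hπyDA : π ((y : Vn n ⧸ ΛB)) ∈ DA := by
    rw [hπmk]
    exact ⟨(((r : ℂ)⁻¹ • a : Vn n) : Vn n ⧸ ΛA), by
      show QuotientAddGroup.map _ _ _ _ _ = _
      show ((N ((r : ℂ)⁻¹ • a) : Vn n) : Vn n ⧸ ΛA) = _
      exact congrArg _ hya⟩
  have hπxDA : π ((x : Vn n ⧸ ΛB)) ∈ DA := by
    rw [hπx_eq]; exact DA.neg_mem hπyDA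
  obtain ⟨w', ⟨hw'E, hw'D⟩, hw'π⟩ := hsurj _ ⟨hπxEA, hπxDA⟩
  have hw'x : w' = (x : Vn n ⧸ ΛB) := hinj _ hw'E _ hxEB hw'π
  have hxDB : (x : Vn n ⧸ ΛB) ∈ DB := hw'x ▸ hw'D
  have : ((a : Vn n) : Vn n ⧸ ΛB) = (x : Vn n ⧸ ΛB) + (y : Vn n ⧸ ΛB) := by
    rw [← QuotientAddGroup.mk_add, ← haxy]
  rw [this]
  exact DB.add_mem hxDB hyDB
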